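/- Let m, n be integers with (m,n) ≠ (0,0), set ω(y,z) = m y + n z, and let Fx, Fy, Fz, Gx, Gy, Gz : ℝ → ℝ be continuously differentiable. Define on ℝ³ the vector fields B(x,y,z) = (Fx(x) cos ω, Fy(x) sin ω, Fz(x) sin ω) and C(x,y,z) = (Gx(x) cos ω, Gy(x) sin ω, Gz(x) sin ω). Then for every x ∈ ℝ, ∫₀^{2π} ∫₀^{2π} [ (B·∇)C + (C·∇)B ]_y (x,y,z) dy dz = 0, where [·]_y denotes the y-component. -/

import Mathlib

open Matrix

noncomputable section

abbrev E3 := Fin 3 → ℝ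

/-- Coordinate projection on `E3` as a continuous linear map. -/
noncomputable def pr (i : Fin 3) : E3 →L[ℝ] ℝ := ContinuousLinearMap.proj i

lemma hasFDerivAt_comp_trig (F T T' : ℝ → ℝ) (hF : ContDiff ℝ 1 F)
    (hT : ∀ t, HasDerivAt T (T' t) t) (a b : ℝ) (p : E3) :
    HasFDerivAt (fun q : E3 => F (q 0) * T (a * q 1 + b * q 2))
      (F (p 0) • (T' (a * p 1 + b * p 2) • (a • pr 1 + b • pr 2)) +
       T (a * p 1 + b * p 2) • (deriv F (p 0) • pr 0)) p := by
  have h0 : HasFDerivAt (fun q : E3 => q 0) (pr 0) p := hasFDerivAt_apply 0 p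
  have hℓ : HasFDerivAt (fun q : E3 => a * q 1 + b * q 2) (a • pr 1 + b • pr 2) p := by
    have h := (a • pr 1 + b • pr 2).hasFDerivAt (x := p)
    have : ⇑(a • pr 1 + b • pr 2) = fun q : E3 => a * q 1 + b * q 2 := by
      funext q
      simp [pr, ContinuousLinearMap.proj_apply, smul_eq_mul]
    rwa [this] at h
  have h1 : HasFDerivAt (fun q : E3 => F (q 0)) (deriv F (p 0) • pr 0) p :=
    ((hF.differentiable one_ne_zero (p 0)).hasDerivAt).comp_hasFDerivAt p h0
  have h2 : HasFDerivAt (fun q : E3 => T (a * q 1 + b * q 2))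
      (T' (a * p 1 + b * p 2) • (a • pr 1 + b • pr 2)) p :=
    (hT _).comp_hasFDerivAt p hℓ
  exact h1.mul h2

lemma int_sin_int (k : ℤ) (hk : k ≠ 0) (c : ℝ) :
    ∫ y in (0:ℝ)..(2 * Real.pi), Real.sin ((k : ℝ) * y + c) = 0 := by
  have hk' : (k : ℝ) ≠ 0 := Int.cast_ne_zero.mpr hk
  rw [intervalIntegral.integral_comp_mul_add Real.sin hk' c]
  rw [integral_sin]
  have : (k : ℝ) * (2 * Real.pi) + c = c + (k : ℝ) * (2 * Real.pi) := by ring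
  rw [this, Real.cos_add_int_mul_two_pi]
  simp

lemma field_hasFDerivAt (a b : ℝ) (F0 F1 F2 : ℝ → ℝ)
    (h0 : ContDiff ℝ 1 F0) (h1 : ContDiff ℝ 1 F1) (h2 : ContDiff ℝ 1 F2)
    (B : E3 → E3)
    (hB : ∀ p : E3, B p = ![F0 (p 0) * Real.cos (a * p 1 + b * p 2),
        F1 (p 0) * Real.sin (a * p 1 + b * p 2),
        F2 (p 0) * Real.sin (a * p 1 + b * p 2)]) (p : E3) :
    HasFDerivAt B (ContinuousLinearMap.pi
      ![F0 (p 0) • ((-Real.sin (a * p 1 + b * p 2)) • (a • pr 1 + b • pr 2)) +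
          Real.cos (a * p 1 + b * p 2) • (deriv F0 (p 0) • pr 0),
        F1 (p 0) • (Real.cos (a * p 1 + b * p 2) • (a • pr 1 + b • pr 2)) +
          Real.sin (a * p 1 + b * p 2) • (deriv F1 (p 0) • pr 0),
        F2 (p 0) • (Real.cos (a * p 1 + b * p 2) • (a • pr 1 + b • pr 2)) +
          Real.sin (a * p 1 + b * p 2) • (deriv F2 (p 0) • pr 0)]) p := by
  apply hasFDerivAt_pi''
  intro i
  rw [ContinuousLinearMap.proj_pi]
  fin_cases i
  · have h := hasFDerivAt_comp_trig F0 Real.cos (fun t => -Real.sin t) h0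
      Real.hasDerivAt_cos a b p
    have he : (fun q : E3 => B q 0) = fun q : E3 => F0 (q 0) * Real.cos (a * q 1 + b * q 2) :=
      funext fun q => by rw [hB]; simp
    simpa [he] using h
  · have h := hasFDerivAt_comp_trig F1 Real.sin Real.cos h1 Real.hasDerivAt_sin a b p
    have he : (fun q : E3 => B q 1) = fun q : E3 => F1 (q 0) * Real.sin (a * q 1 + b * q 2) :=
      funext fun q => by rw [hB]; simp
    simpa [he] using h
  · have h := hasFDerivAt_comp_trig F2 Real.sin Real.cos h2 Real.hasDerivAt_sin a b p
    have he : (fun q : E3 => B q 2) = fun q : E3 => F2 (q 0) * Real.sin (a * q 1 + b * q 2) :=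
      funext fun q => by rw [hB]; simp
    simpa [he] using h

theorem statement12 (m n : ℤ) (hmn : (m, n) ≠ (0, 0))
    (Fx Fy Fz Gx Gy Gz : ℝ → ℝ)
    (hFx : ContDiff ℝ 1 Fx) (hFy : ContDiff ℝ 1 Fy) (hFz : ContDiff ℝ 1 Fz)
    (hGx : ContDiff ℝ 1 Gx) (hGy : ContDiff ℝ 1 Gy) (hGz : ContDiff ℝ 1 Gz)
    (B C : E3 → E3)
    (hB : ∀ p : E3, B p =
      ![Fx (p 0) * Real.cos ((m : ℝ) * p 1 + (n : ℝ) * p 2),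
        Fy (p 0) * Real.sin ((m : ℝ) * p 1 + (n : ℝ) * p 2),
        Fz (p 0) * Real.sin ((m : ℝ) * p 1 + (n : ℝ) * p 2)])
    (hC : ∀ p : E3, C p =
      ![Gx (p 0) * Real.cos ((m : ℝ) * p 1 + (n : ℝ) * p 2),
        Gy (p 0) * Real.sin ((m : ℝ) * p 1 + (n : ℝ) * p 2),
        Gz (p 0) * Real.sin ((m : ℝ) * p 1 + (n : ℝ) * p 2)]) :
    ∀ x : ℝ, (∫ z in (0:ℝ)..(2 * Real.pi), ∫ y in (0:ℝ)..(2 * Real.pi),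
      (fderiv ℝ C ![x, y, z] (B ![x, y, z]) + fderiv ℝ B ![x, y, z] (C ![x, y, z])) 1) = 0 := by
  intro x
  set K : ℝ := (Gy x * ((m:ℝ) * Fy x + (n:ℝ) * Fz x) + deriv Gy x * Fx x +
      Fy x * ((m:ℝ) * Gy x + (n:ℝ) * Gz x) + deriv Fy x * Gx x) / 2 with hK
  have key : ∀ y z : ℝ,
      (fderiv ℝ C ![x, y, z] (B ![x, y, z]) + fderiv ℝ B ![x, y, z] (C ![x, y, z])) 1
        = K * Real.sin (((2 * m : ℤ) : ℝ) * y + ((2 * n : ℤ) : ℝ) * z) := by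
    intro y z
    have hBd := field_hasFDerivAt (m:ℝ) (n:ℝ) Fx Fy Fz hFx hFy hFz B hB ![x, y, z]
    have hCd := field_hasFDerivAt (m:ℝ) (n:ℝ) Gx Gy Gz hGx hGy hGz C hC ![x, y, z]
    rw [hBd.fderiv, hCd.fderiv]
    have hcast : ((2 * m : ℤ) : ℝ) * y + ((2 * n : ℤ) : ℝ) * z
        = 2 * ((m:ℝ) * y + (n:ℝ) * z) := by push_cast; ring
    rw [hcast, Real.sin_two_mul]
    simp only [Pi.add_apply, ContinuousLinearMap.pi_apply, hB, hC,
      Matrix.cons_val_zero, Matrix.cons_val_one, Matrix.head_cons, Matrix.cons_val_two,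
      Matrix.tail_cons, ContinuousLinearMap.add_apply, ContinuousLinearMap.smul_apply,
      pr, ContinuousLinearMap.proj_apply, smul_eq_mul, hK]
    ring
  simp only [key]
  rcases eq_or_ne m 0 with hm | hm
  · have hn : n ≠ 0 := by
      rintro rfl; exact hmn (by rw [hm])
    subst hm
    have h2n : (2 * n : ℤ) ≠ 0 := by simpa using hn
    have hinner : ∀ z : ℝ, (∫ y in (0:ℝ)..(2 * Real.pi),
        K * Real.sin (((2 * 0 : ℤ) : ℝ) * y + ((2 * n : ℤ) : ℝ) * z))
        = (2 * Real.pi * K) * Real.sin (((2 * n : ℤ) : ℝ) * z + 0) := by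
      intro z
      simp [mul_comm, mul_assoc, mul_left_comm]
    simp only [hinner]
    rw [intervalIntegral.integral_const_mul, int_sin_int (2 * n) h2n 0, mul_zero]
  · have h2m : (2 * m : ℤ) ≠ 0 := by simpa using hm
    have hinner : ∀ z : ℝ, (∫ y in (0:ℝ)..(2 * Real.pi),
        K * Real.sin (((2 * m : ℤ) : ℝ) * y + ((2 * n : ℤ) : ℝ) * z)) = 0 := by
      intro z
      rw [intervalIntegral.integral_const_mul, int_sin_int (2 * m) h2m, mul_zero]
    simp only [hinner, intervalIntegral.integral_zero]
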